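/- arXiv:1605.06398 — 3 statements merged into one kernel-verified Lean document; each statement's English description precedes it below -/
import Mathlib

section
/- Let A be μ-strongly monotone with resolvent defined everywhere, B be monotone and L-Lipschitz on Euclidean space E, and z* the unique zero of A + B. Consider the forward-backward iteration z_t = (I + σA)^{-1}(z_{t-1} - σB(z_{t-1})) with step σ = μ/L². Then ‖z_t - z*‖² ≤ (L²/(μ² + L²))^t ‖z_0 - z*‖². -/
open RealInnerProductSpace

set_option maxHeartbeats 1000000

theorem stmt_3 {E : Type*} [NormedAddCommGroup E] [InnerProductSpace ℝ E]
    (A B J : E → E) (μ L σ : ℝ) (hμ : 0 < μ) (hL : 0 < L)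
    (hσ : σ = μ / L ^ 2)
    (hA : ∀ z z' : E, μ * ‖z - z'‖ ^ 2 ≤ ⟪A z - A z', z - z'⟫)
    (hBmono : ∀ z z' : E, 0 ≤ ⟪B z - B z', z - z'⟫)
    (hBlip : ∀ z z' : E, ‖B z - B z'‖ ≤ L * ‖z - z'‖)
    (hJ : ∀ z : E, J z + σ • A (J z) = z)
    (zstar : E) (hzstar : A zstar + B zstar = 0)
    (z : ℕ → E) (hiter : ∀ t : ℕ, z (t + 1) = J (z t - σ • B (z t))) :
    ∀ t : ℕ, ‖z t - zstar‖ ^ 2 ≤ (L ^ 2 / (μ ^ 2 + L ^ 2)) ^ t * ‖z 0 - zstar‖ ^ 2 := by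
  have hσpos : 0 < σ := by rw [hσ]; positivity
  have hc : 0 ≤ L ^ 2 / (μ ^ 2 + L ^ 2) := by positivity
  have step : ∀ t : ℕ, ‖z (t + 1) - zstar‖ ^ 2 ≤
      (L ^ 2 / (μ ^ 2 + L ^ 2)) * ‖z t - zstar‖ ^ 2 := by
    intro t
    set x := z t with hx
    set p := z (t + 1) with hp
    have h1 : p + σ • A p = x - σ • B x := by
      rw [hp, hiter t]; exact hJ _
    have h2 : zstar + σ • A zstar = zstar - σ • B zstar := by
      have : A zstar = -B zstar := by
        have := hzstar; linear_combination (norm := abel_nf) this - B zstar + B zstar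
      rw [this, smul_neg]; abel
    have hkey : (p - zstar) + σ • (A p - A zstar)
        = (x - σ • B x) - (zstar - σ • B zstar) := by
      rw [smul_sub]
      rw [← h1, ← h2]; abel
    set a := ‖p - zstar‖ with ha
    set b := ‖(x - σ • B x) - (zstar - σ • B zstar)‖ with hb
    have ha0 : 0 ≤ a := norm_nonneg _
    have hb0 : 0 ≤ b := norm_nonneg _
    set k := 1 + σ * μ with hk
    have hkpos : 0 < k := by positivity
    -- lower bound on inner product
    have hlow : k * a ^ 2 ≤ a * b := by
      have e1 : ⟪(x - σ • B x) - (zstar - σ • B zstar), p - zstar⟫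
          = ‖p - zstar‖ ^ 2 + σ * ⟪A p - A zstar, p - zstar⟫ := by
        rw [← hkey, inner_add_left, real_inner_smul_left, real_inner_self_eq_norm_sq]
      have e2 : k * a ^ 2 ≤ ⟪(x - σ • B x) - (zstar - σ • B zstar), p - zstar⟫ := by
        rw [e1]
        have := hA p zstar
        nlinarith [mul_le_mul_of_nonneg_left this (le_of_lt hσpos)]
      calc k * a ^ 2 ≤ ⟪(x - σ • B x) - (zstar - σ • B zstar), p - zstar⟫ := e2
        _ ≤ b * a := real_inner_le_norm _ _
        _ = a * b := mul_comm _ _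
    have h3 : k ^ 2 * a ^ 2 ≤ b ^ 2 := by
      nlinarith [mul_self_nonneg (k * a - b),
        mul_le_mul_of_nonneg_left hlow (le_of_lt hkpos)]
    -- upper bound on b^2
    have h4 : b ^ 2 ≤ (1 + σ ^ 2 * L ^ 2) * ‖x - zstar‖ ^ 2 := by
      have e3 : (x - σ • B x) - (zstar - σ • B zstar)
          = (x - zstar) - σ • (B x - B zstar) := by
        rw [smul_sub]; abel
      rw [hb, e3, norm_sub_sq_real, real_inner_smul_right, norm_smul,
        Real.norm_eq_abs, abs_of_pos hσpos]
      have hmono := hBmono x zstar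
      have hlip := hBlip x zstar
      have hBn : 0 ≤ ‖B x - B zstar‖ := norm_nonneg _
      have hxn : 0 ≤ ‖x - zstar‖ := norm_nonneg _
      have hip : 0 ≤ ⟪x - zstar, B x - B zstar⟫ := by
        rw [real_inner_comm]; exact hmono
      nlinarith [mul_le_mul hlip hlip hBn (by positivity : (0:ℝ) ≤ L * ‖x - zstar‖),
        sq_nonneg σ, mul_nonneg (le_of_lt hσpos) hip]
    have h5 : a ^ 2 ≤ (1 + σ ^ 2 * L ^ 2) / k ^ 2 * ‖x - zstar‖ ^ 2 := by
      rw [div_mul_eq_mul_div, le_div_iff₀ (by positivity)]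
      nlinarith
    have h6 : (1 + σ ^ 2 * L ^ 2) / k ^ 2 = L ^ 2 / (μ ^ 2 + L ^ 2) := by
      rw [hk, hσ]
      have hL2 : (L:ℝ) ^ 2 ≠ 0 := by positivity
      have h2 : μ ^ 2 + L ^ 2 ≠ 0 := by positivity
      field_simp
      ring
    rw [← h6]
    exact h5
  intro t
  induction t with
  | zero => simp
  | succ n ih =>
      calc ‖z (n + 1) - zstar‖ ^ 2
          ≤ (L ^ 2 / (μ ^ 2 + L ^ 2)) * ‖z n - zstar‖ ^ 2 := step n
        _ ≤ (L ^ 2 / (μ ^ 2 + L ^ 2)) *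
            ((L ^ 2 / (μ ^ 2 + L ^ 2)) ^ n * ‖z 0 - zstar‖ ^ 2) := by
            exact mul_le_mul_of_nonneg_left ih hc
        _ = (L ^ 2 / (μ ^ 2 + L ^ 2)) ^ (n + 1) * ‖z 0 - zstar‖ ^ 2 := by ring
end

section
/- Consider a nonnegative sequence satisfying E‖z_t - z*‖² ≤ (1 - η_t)E‖z_{t-1} - z*‖² + (8/(t+1+A)²)(1/μ²)·E‖C_t z*‖², with η_t = 2/(t+1+A) for a constant A ≥ 0. Then for all t ≥ 1, E‖z_t - z*‖² ≤ ((1+A)²/(t+A)²)‖z_0 - z*‖² + (8/(μ²(t+A))) sup_{1≤u≤t} E‖C_u z*‖². -/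
set_option maxHeartbeats 1000000

theorem stmt_10 (a c : ℕ → ℝ) (A μ : ℝ) (hA : 0 ≤ A) (hμ : 0 < μ)
    (ha : ∀ t, 0 ≤ a t) (hc : ∀ t, 0 ≤ c t)
    (hrec : ∀ t : ℕ, 1 ≤ t →
      a t ≤ (1 - 2 / ((t : ℝ) + 1 + A)) * a (t - 1)
            + 8 / (((t : ℝ) + 1 + A) ^ 2) * (1 / μ ^ 2) * c t) :
    ∀ t : ℕ, ∀ ht : 1 ≤ t,
      a t ≤ (1 + A) ^ 2 / (((t : ℝ) + A) ^ 2) * a 0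
            + 8 / (μ ^ 2 * ((t : ℝ) + A)) *
                (Finset.Icc 1 t).sup' (Finset.nonempty_Icc.mpr ht) c := by
  have hμ2 : (0:ℝ) < μ ^ 2 := by positivity
  have aux : ∀ t : ℕ, ((t:ℝ) + A) * ((t:ℝ) + 1 + A) * a t ≤
      A * (1 + A) * a 0 + 8 / μ ^ 2 * ∑ u ∈ Finset.Icc 1 t, c u := by
    intro t
    induction t with
    | zero => simp
    | succ t ih =>
      have hd : (0:ℝ) < (t:ℝ) + 2 + A := by linarith [Nat.cast_nonneg (α := ℝ) t]
      have hd1 : (0:ℝ) < (t:ℝ) + 1 + A := by linarith [Nat.cast_nonneg (α := ℝ) t]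
      have hr := hrec (t + 1) (by omega)
      simp only [Nat.add_sub_cancel] at hr
      push_cast at hr
      have e1 : (1 - 2 / ((t:ℝ) + 1 + 1 + A)) = ((t:ℝ) + A) / ((t:ℝ) + 2 + A) := by
        field_simp
        ring
      rw [e1] at hr
      -- multiply by (t+2+A)
      have hr2 : ((t:ℝ) + 2 + A) * a (t + 1) ≤
          ((t:ℝ) + A) * a t + 8 / (((t:ℝ) + 2 + A) * μ ^ 2) * c (t + 1) := by
        have := mul_le_mul_of_nonneg_left hr hd.le
        calc ((t:ℝ) + 2 + A) * a (t + 1) ≤ ((t:ℝ) + 2 + A) *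
              (((t:ℝ) + A) / ((t:ℝ) + 2 + A) * a t +
                8 / (((t:ℝ) + 1 + 1 + A) ^ 2) * (1 / μ ^ 2) * c (t + 1)) := this
          _ = ((t:ℝ) + A) * a t + 8 / (((t:ℝ) + 2 + A) * μ ^ 2) * c (t + 1) := by
              field_simp
              ring
      -- multiply by (t+1+A)
      have hr3 : ((t:ℝ) + 1 + A) * (((t:ℝ) + 2 + A) * a (t + 1)) ≤
          ((t:ℝ) + 1 + A) * (((t:ℝ) + A) * a t)
            + ((t:ℝ) + 1 + A) * (8 / (((t:ℝ) + 2 + A) * μ ^ 2) * c (t + 1)) := by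
        have := mul_le_mul_of_nonneg_left hr2 hd1.le
        linarith [this, mul_add ((t:ℝ) + 1 + A) (((t:ℝ) + A) * a t)
          (8 / (((t:ℝ) + 2 + A) * μ ^ 2) * c (t + 1))]
      have hcoef : ((t:ℝ) + 1 + A) * (8 / (((t:ℝ) + 2 + A) * μ ^ 2) * c (t + 1)) ≤
          8 / μ ^ 2 * c (t + 1) := by
        rw [← mul_assoc]
        apply mul_le_mul_of_nonneg_right _ (hc (t + 1))
        rw [mul_div_assoc', div_le_div_iff₀ (by positivity) hμ2]
        nlinarith
      have hsum : ∑ u ∈ Finset.Icc 1 (t + 1), c u =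
          (∑ u ∈ Finset.Icc 1 t, c u) + c (t + 1) :=
        Finset.sum_Icc_succ_top (by omega) c
      push_cast
      rw [hsum]
      nlinarith [hr3, hcoef, ih]
  intro t ht
  set S := (Finset.Icc 1 t).sup' (Finset.nonempty_Icc.mpr ht) c with hS
  have hS0 : 0 ≤ S := le_trans (hc 1) (Finset.le_sup' c (by simp [Finset.mem_Icc]; omega))
  have hsumS : ∑ u ∈ Finset.Icc 1 t, c u ≤ (t:ℝ) * S := by
    calc ∑ u ∈ Finset.Icc 1 t, c u ≤ (Finset.Icc 1 t).card • S :=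
          Finset.sum_le_card_nsmul _ _ _ (fun u hu => Finset.le_sup' c hu)
      _ = (t:ℝ) * S := by rw [Nat.card_Icc]; simp [nsmul_eq_mul]
  have hx1 : (1:ℝ) ≤ (t:ℝ) := by exact_mod_cast ht
  have hxA : (0:ℝ) < (t:ℝ) + A := by linarith
  have hxA1 : (0:ℝ) < (t:ℝ) + 1 + A := by linarith
  have key : ((t:ℝ) + A) * ((t:ℝ) + 1 + A) * a t ≤
      A * (1 + A) * a 0 + 8 / μ ^ 2 * ((t:ℝ) * S) := by
    refine (aux t).trans ?_
    have : 8 / μ ^ 2 * ∑ u ∈ Finset.Icc 1 t, c u ≤ 8 / μ ^ 2 * ((t:ℝ) * S) :=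
      mul_le_mul_of_nonneg_left hsumS (by positivity)
    linarith
  rw [← mul_le_mul_iff_of_pos_right (mul_pos hxA hxA1)]
  calc a t * (((t:ℝ) + A) * ((t:ℝ) + 1 + A))
      = ((t:ℝ) + A) * ((t:ℝ) + 1 + A) * a t := by ring
    _ ≤ A * (1 + A) * a 0 + 8 / μ ^ 2 * ((t:ℝ) * S) := key
    _ ≤ ((1 + A) ^ 2 / (((t:ℝ) + A) ^ 2) * a 0
          + 8 / (μ ^ 2 * ((t:ℝ) + A)) * S) * (((t:ℝ) + A) * ((t:ℝ) + 1 + A)) := by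
        rw [← sub_nonneg]
        have e2 : ((1 + A) ^ 2 / (((t:ℝ) + A) ^ 2) * a 0
              + 8 / (μ ^ 2 * ((t:ℝ) + A)) * S) * (((t:ℝ) + A) * ((t:ℝ) + 1 + A))
              - (A * (1 + A) * a 0 + 8 / μ ^ 2 * ((t:ℝ) * S))
            = (1 + A) * a 0 * ((1 + A) * ((t:ℝ) + 1 + A) / ((t:ℝ) + A) - A)
              + 8 / μ ^ 2 * S * (((t:ℝ) + 1 + A) - (t:ℝ)) := by
          field_simp
          ring
        rw [e2]
        have h1 : A ≤ (1 + A) * ((t:ℝ) + 1 + A) / ((t:ℝ) + A) := by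
          rw [le_div_iff₀ hxA]
          nlinarith
        have h2 : (0:ℝ) ≤ 8 / μ ^ 2 * S := by positivity
        have h3 : (0:ℝ) ≤ (1 + A) * a 0 := by nlinarith [ha 0]
        nlinarith
end

section
/- Let A be μ-strongly monotone with everywhere-defined resolvent, B = Σ_{i∈I} B_i monotone L-Lipschitz with L̄ = L̄(π) the variance constant, and z* the zero of A + B. One SVRG inner iteration z_t = (I+σA)^{-1}( z_{t-1} - σ[B(z̃) + (1/π_{i_t})(B_{i_t}(z_{t-1}) - B_{i_t}(z̃))]) with i_t ~ π independent satisfies E[‖z_t - z*‖² | F_{t-1}] ≤ ((1+σ²L²)/(1+σμ)²)‖z_{t-1} - z*‖² + (σ²L̄²/(1+σμ)²)‖z_{t-1} - z̃‖². -/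
open RealInnerProductSpace

set_option maxHeartbeats 1000000 in
theorem stmt_12 {E : Type*} [NormedAddCommGroup E] [InnerProductSpace ℝ E]
    {ι : Type*} [Fintype ι]
    (A : E → E) (B : ι → E → E) (J : E → E) (π : ι → ℝ)
    (μ σ L Lbar2 : ℝ) (hμ : 0 < μ) (hσ : 0 < σ)
    (hπpos : ∀ i, 0 < π i) (hπsum : ∑ i, π i = 1)
    (hA : ∀ z z' : E, μ * ‖z - z'‖ ^ 2 ≤ ⟪A z - A z', z - z'⟫)
    (hJ : ∀ z : E, J z + σ • A (J z) = z)
    (hBmono : ∀ z z' : E, 0 ≤ ⟪(∑ i, B i z) - ∑ i, B i z', z - z'⟫)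
    (hBlip : ∀ z z' : E, ‖(∑ i, B i z) - ∑ i, B i z'‖ ≤ L * ‖z - z'‖)
    (hLbar : ∀ z z' : E, ∑ i, (π i)⁻¹ * ‖B i z - B i z'‖ ^ 2 ≤ Lbar2 * ‖z - z'‖ ^ 2)
    (zstar : E) (hzstar : zstar = J (zstar - σ • ∑ i, B i zstar))
    (z ztilde : E) :
    ∑ i, π i *
        ‖J (z - σ • ((∑ j, B j ztilde) + (π i)⁻¹ • (B i z - B i ztilde))) - zstar‖ ^ 2
      ≤ (1 + σ ^ 2 * L ^ 2) / (1 + σ * μ) ^ 2 * ‖z - zstar‖ ^ 2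
        + σ ^ 2 * Lbar2 / (1 + σ * μ) ^ 2 * ‖z - ztilde‖ ^ 2 := by
  have hσμ : (0:ℝ) < (1 + σ * μ)^2 := by positivity
  -- Step 1: resolvent contraction
  have hcontract : ∀ v w : E, (1 + σ*μ)^2 * ‖J v - J w‖^2 ≤ ‖v - w‖^2 := by
    intro v w
    have hd : v - w = (J v - J w) + σ • (A (J v) - A (J w)) := by
      conv_lhs => rw [← hJ v, ← hJ w]
      module
    set d := J v - J w with hdd
    set a := A (J v) - A (J w) with ha
    have h1 : μ * ‖d‖^2 ≤ ⟪a, d⟫ := hA (J v) (J w)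
    have h2 : ⟪a, d⟫ ≤ ‖a‖ * ‖d‖ := real_inner_le_norm a d
    have hexp : ‖v - w‖^2 = ‖d‖^2 + 2 * (σ * ⟪d, a⟫) + (σ*‖a‖)^2 := by
      rw [hd, norm_add_sq_real, inner_smul_right, norm_smul, Real.norm_eq_abs,
        abs_of_pos hσ]
    rw [hexp, real_inner_comm a d]
    rcases eq_or_lt_of_le (norm_nonneg d) with h0 | h0
    · have hz : ‖d‖ = 0 := h0.symm
      have hi : ⟪a, d⟫ = 0 := by
        have : d = 0 := norm_eq_zero.mp hz
        simp [this]
      rw [hi, hz]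
      nlinarith [sq_nonneg (σ * ‖a‖)]
    · have h3 : μ * ‖d‖ ≤ ‖a‖ := by nlinarith
      have h4 : (μ * ‖d‖) * (μ * ‖d‖) ≤ ‖a‖ * ‖a‖ :=
        mul_self_le_mul_self (by positivity) h3
      nlinarith [mul_le_mul_of_nonneg_left h1 hσ.le,
        mul_le_mul_of_nonneg_left h4 (sq_nonneg σ)]
  set Bz : E := ∑ j, B j z with hBz
  set Bt : E := ∑ j, B j ztilde with hBt
  set Bs : E := ∑ j, B j zstar with hBs
  obtain ⟨c, hc⟩ : ∃ c : ι → E, c = fun i => (π i)⁻¹ • (B i z - B i ztilde) := ⟨_, rfl⟩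
  -- mean of the stochastic operator
  have hsum_c : ∑ i, π i • c i = Bz - Bt := by
    have h : ∀ i ∈ Finset.univ, π i • c i = B i z - B i ztilde := by
      intro i _
      simp only [hc]
      rw [smul_smul, mul_inv_cancel₀ (hπpos i).ne', one_smul]
    rw [Finset.sum_congr rfl h, Finset.sum_sub_distrib, hBz, hBt]
  -- variance identity
  have hvar : ∑ i, π i * ‖(Bz - Bs) + (c i - (Bz - Bt))‖^2
      = ‖Bz - Bs‖^2 + (∑ i, π i * ‖c i‖^2 - ‖Bz - Bt‖^2) := by
    have h1 : ∀ i ∈ Finset.univ, π i * ‖(Bz - Bs) + (c i - (Bz - Bt))‖^2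
        = π i * ‖Bz - Bs‖^2 + 2 * ⟪Bz - Bs, π i • (c i - (Bz - Bt))⟫
          + π i * ‖c i - (Bz - Bt)‖^2 := by
      intro i _
      rw [norm_add_sq_real, real_inner_smul_right]
      ring
    rw [Finset.sum_congr rfl h1, Finset.sum_add_distrib, Finset.sum_add_distrib,
      ← Finset.sum_mul, hπsum, one_mul, ← Finset.mul_sum, ← inner_sum]
    have h2 : ∑ i, π i • (c i - (Bz - Bt)) = 0 := by
      have h : ∀ i ∈ Finset.univ, π i • (c i - (Bz - Bt)) = π i • c i - π i • (Bz - Bt) :=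
        fun i _ => smul_sub _ _ _
      rw [Finset.sum_congr rfl h, Finset.sum_sub_distrib, ← Finset.sum_smul, hπsum, one_smul,
        hsum_c, sub_self]
    rw [h2, inner_zero_right]
    have h3 : ∀ i ∈ Finset.univ, π i * ‖c i - (Bz - Bt)‖^2
        = π i * ‖c i‖^2 - 2 * ⟪π i • c i, Bz - Bt⟫ + π i * ‖Bz - Bt‖^2 := by
      intro i _
      rw [norm_sub_sq_real, real_inner_smul_left]
      ring
    rw [Finset.sum_congr rfl h3, Finset.sum_add_distrib, Finset.sum_sub_distrib,
      ← Finset.sum_mul, hπsum, one_mul, ← Finset.mul_sum, ← sum_inner, hsum_c,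
      real_inner_self_eq_norm_sq]
    ring
  -- second-moment bound on correction term
  have hc2 : ∑ i, π i * ‖c i‖^2 ≤ Lbar2 * ‖z - ztilde‖^2 := by
    have h : ∀ i ∈ Finset.univ, π i * ‖c i‖^2 = (π i)⁻¹ * ‖B i z - B i ztilde‖^2 := by
      intro i _
      simp only [hc]
      rw [norm_smul, Real.norm_eq_abs, abs_of_pos (inv_pos.2 (hπpos i)), mul_pow]
      field_simp [(hπpos i).ne']
    rw [Finset.sum_congr rfl h]
    exact hLbar z ztilde
  -- weighted mean of u i
  have hsum_u : ∑ i, π i • (Bt + c i - Bs) = Bz - Bs := by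
    have h : ∀ i ∈ Finset.univ, π i • (Bt + c i - Bs)
        = π i • c i + (π i • Bt - π i • Bs) := by
      intro i _
      module
    rw [Finset.sum_congr rfl h, Finset.sum_add_distrib, Finset.sum_sub_distrib,
      ← Finset.sum_smul, ← Finset.sum_smul, hπsum, one_smul, one_smul, hsum_c]
    module
  -- second moment of u i
  have hu2 : ∑ i, π i * ‖Bt + c i - Bs‖^2
      ≤ L^2 * ‖z - zstar‖^2 + Lbar2 * ‖z - ztilde‖^2 := by
    have hrw : ∀ i ∈ Finset.univ, π i * ‖Bt + c i - Bs‖^2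
        = π i * ‖(Bz - Bs) + (c i - (Bz - Bt))‖^2 := by
      intro i _
      have h : Bt + c i - Bs = (Bz - Bs) + (c i - (Bz - Bt)) := by module
      rw [h]
    rw [Finset.sum_congr rfl hrw, hvar]
    have hm : ‖Bz - Bs‖^2 ≤ L^2 * ‖z - zstar‖^2 := by
      have h := hBlip z zstar
      rw [← hBz, ← hBs] at h
      nlinarith [norm_nonneg (Bz - Bs), norm_nonneg (z - zstar)]
    nlinarith [hc2, sq_nonneg ‖Bz - Bt‖]
  -- monotonicity
  have hmono : 0 ≤ ⟪z - zstar, Bz - Bs⟫ := by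
    have h := hBmono z zstar
    rw [← hBz, ← hBs] at h
    rw [real_inner_comm]
    exact h
  -- main expansion
  have hS : ∑ i, π i * ‖(z - zstar) - σ • (Bt + c i - Bs)‖^2
      ≤ (1 + σ^2 * L^2) * ‖z - zstar‖^2 + σ^2 * Lbar2 * ‖z - ztilde‖^2 := by
    have h1 : ∀ i ∈ Finset.univ, π i * ‖(z - zstar) - σ • (Bt + c i - Bs)‖^2
        = π i * ‖z - zstar‖^2 - 2 * σ * ⟪z - zstar, π i • (Bt + c i - Bs)⟫
          + σ^2 * (π i * ‖Bt + c i - Bs‖^2) := by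
      intro i _
      rw [norm_sub_sq_real, inner_smul_right, real_inner_smul_right, norm_smul,
        Real.norm_eq_abs, abs_of_pos hσ, mul_pow]
      ring
    rw [Finset.sum_congr rfl h1, Finset.sum_add_distrib, Finset.sum_sub_distrib,
      ← Finset.sum_mul, hπsum, one_mul, ← Finset.mul_sum, ← Finset.mul_sum, ← inner_sum,
      hsum_u]
    nlinarith [hu2, mul_le_mul_of_nonneg_left hmono (by positivity : (0:ℝ) ≤ 2*σ)]
  -- pointwise contraction applied
  have hpt : ∀ i, π i * ‖J (z - σ • (Bt + c i)) - zstar‖ ^ 2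
      ≤ ((1 + σ*μ)^2)⁻¹ * (π i * ‖(z - zstar) - σ • (Bt + c i - Bs)‖^2) := by
    intro i
    have h1 := hcontract (z - σ • (Bt + c i)) (zstar - σ • Bs)
    rw [← hzstar] at h1
    have h2 : (z - σ • (Bt + c i)) - (zstar - σ • Bs)
        = (z - zstar) - σ • (Bt + c i - Bs) := by module
    rw [h2] at h1
    have h3 : ‖J (z - σ • (Bt + c i)) - zstar‖ ^ 2
        ≤ ((1 + σ*μ)^2)⁻¹ * ‖(z - zstar) - σ • (Bt + c i - Bs)‖^2 := by
      have h4 := mul_le_mul_of_nonneg_left h1 (inv_nonneg.2 hσμ.le)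
      rwa [inv_mul_cancel_left₀ hσμ.ne'] at h4
    calc π i * ‖J (z - σ • (Bt + c i)) - zstar‖ ^ 2
        ≤ π i * (((1 + σ*μ)^2)⁻¹ * ‖(z - zstar) - σ • (Bt + c i - Bs)‖^2) :=
          mul_le_mul_of_nonneg_left h3 (hπpos i).le
      _ = ((1 + σ*μ)^2)⁻¹ * (π i * ‖(z - zstar) - σ • (Bt + c i - Bs)‖^2) := by ring
  calc ∑ i, π i * ‖J (z - σ • (Bt + (π i)⁻¹ • (B i z - B i ztilde))) - zstar‖ ^ 2
      = ∑ i, π i * ‖J (z - σ • (Bt + c i)) - zstar‖ ^ 2 := by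
        refine Finset.sum_congr rfl fun i _ => ?_
        simp only [hc]
    _ ≤ ∑ i, ((1 + σ*μ)^2)⁻¹ * (π i * ‖(z - zstar) - σ • (Bt + c i - Bs)‖^2) :=
        Finset.sum_le_sum (fun i _ => hpt i)
    _ = ((1 + σ*μ)^2)⁻¹ * ∑ i, π i * ‖(z - zstar) - σ • (Bt + c i - Bs)‖^2 := by
        rw [← Finset.mul_sum]
    _ ≤ ((1 + σ*μ)^2)⁻¹ * ((1 + σ^2 * L^2) * ‖z - zstar‖^2 + σ^2 * Lbar2 * ‖z - ztilde‖^2) :=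
        mul_le_mul_of_nonneg_left hS (by positivity)
    _ = (1 + σ ^ 2 * L ^ 2) / (1 + σ * μ) ^ 2 * ‖z - zstar‖ ^ 2
        + σ ^ 2 * Lbar2 / (1 + σ * μ) ^ 2 * ‖z - ztilde‖ ^ 2 := by
        rw [div_eq_inv_mul, div_eq_inv_mul]
        ring
end
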